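/- Let m ≥ 3 and let X be a finite set with |X| = 2m−2. Then there exist two positively edge-weighted phylogenetic X-trees T and T' whose m-subtree weight maps agree on every m-element subset of X, but such that there is no graph isomorphism from T to T' fixing every element of X and preserving edge weights. -/

import Mathlib

open SimpleGraph Finset

attribute [local instance] Classical.propDecidable

noncomputable section

/-- `e` lies on some path (hence on the unique path, in a tree) from `a` to `b`. -/
def OnPath {V : Type*} (G : SimpleGraph V) (a b : V) (e : Sym2 V) : Prop :=
  ∃ p : G.Walk a b, p.IsPath ∧ e ∈ p.edges

/-- The edge set `[R]` of the smallest subtree of a tree `G` spanning `R`. -/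
def subtreeEdges {V : Type*} [Fintype V] (G : SimpleGraph V) (R : Finset V) :
    Finset (Sym2 V) :=
  G.edgeFinset.filter fun e => ∃ a ∈ R, ∃ b ∈ R, OnPath G a b e

/-- The subtree weight `D(R) = ∑_{e ∈ [R]} w(e)`. -/
def subtreeWeight {V : Type*} [Fintype V] (G : SimpleGraph V) (w : Sym2 V → ℝ)
    (R : Finset V) : ℝ :=
  ∑ e ∈ subtreeEdges G R, w e

namespace PS

variable {n : ℕ}

def emb (i : Fin n) : Fin (n + 2) := ⟨i.val, by omega⟩
def U (n : ℕ) : Fin (n + 2) := ⟨n, by omega⟩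
def Vt (n : ℕ) : Fin (n + 2) := ⟨n + 1, by omega⟩

lemma emb_ne_U (i : Fin n) : emb i ≠ U n := by
  simp [emb, U, Fin.ext_iff]; omega

lemma emb_ne_Vt (i : Fin n) : emb i ≠ Vt n := by
  simp [emb, Vt, Fin.ext_iff]; omega

lemma U_ne_Vt : U n ≠ Vt n := by simp [U, Vt, Fin.ext_iff]

lemma emb_injective : Function.Injective (emb (n := n)) := by
  intro i j h
  simpa [emb, Fin.ext_iff] using h

def hub (σ : Fin n → Prop) (i : Fin n) : Fin (n + 2) :=
  if σ i then U n else Vt n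

lemma hub_eq_or (σ : Fin n → Prop) (i : Fin n) : hub σ i = U n ∨ hub σ i = Vt n := by
  unfold hub; split <;> simp

lemma emb_ne_hub (σ : Fin n → Prop) (i j : Fin n) : emb i ≠ hub σ j := by
  rcases hub_eq_or σ j with h | h <;> rw [h]
  exacts [emb_ne_U i, emb_ne_Vt i]

lemma hub_of_mem (σ : Fin n → Prop) {i : Fin n} (h : σ i) : hub σ i = U n := if_pos h
lemma hub_of_not_mem (σ : Fin n → Prop) {i : Fin n} (h : ¬ σ i) : hub σ i = Vt n := if_neg h

def G (σ : Fin n → Prop) : SimpleGraph (Fin (n + 2)) where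
  Adj a b := (∃ i, (a = emb i ∧ b = hub σ i) ∨ (b = emb i ∧ a = hub σ i)) ∨
    (a = U n ∧ b = Vt n) ∨ (a = Vt n ∧ b = U n)
  symm := by
    constructor
    rintro a b (⟨i, h | h⟩ | h | h)
    · exact Or.inl ⟨i, Or.inr h⟩
    · exact Or.inl ⟨i, Or.inl h⟩
    · exact Or.inr (Or.inr ⟨h.2, h.1⟩)
    · exact Or.inr (Or.inl ⟨h.2, h.1⟩)
  loopless := by
    constructor
    intro a h
    rcases h with ⟨i, h | h⟩ | h | h
    · exact emb_ne_hub σ i i (h.1.symm ▸ h.2 ▸ rfl)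
    · exact emb_ne_hub σ i i (h.1.symm ▸ h.2 ▸ rfl)
    · exact U_ne_Vt (h.1.symm.trans h.2)
    · exact U_ne_Vt (h.2.symm.trans h.1)

lemma adj_emb_iff (σ : Fin n → Prop) (i : Fin n) (b : Fin (n + 2)) :
    (G σ).Adj (emb i) b ↔ b = hub σ i := by
  constructor
  · rintro (⟨j, ⟨h1, h2⟩ | ⟨h1, h2⟩⟩ | ⟨h1, h2⟩ | ⟨h1, h2⟩)
    · rw [emb_injective h1]; exact h2
    · exact absurd h2 (emb_ne_hub σ i j)
    · exact absurd h1 (emb_ne_U i)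
    · exact absurd h1 (emb_ne_Vt i)
  · rintro rfl; exact Or.inl ⟨i, Or.inl ⟨rfl, rfl⟩⟩

lemma adj_U_iff (σ : Fin n → Prop) (b : Fin (n + 2)) :
    (G σ).Adj (U n) b ↔ b = Vt n ∨ ∃ i, σ i ∧ b = emb i := by
  constructor
  · rintro (⟨j, ⟨h1, h2⟩ | ⟨h1, h2⟩⟩ | ⟨h1, h2⟩ | ⟨h1, h2⟩)
    · exact absurd h1.symm (emb_ne_U j)
    · rcases hub_eq_or σ j with h | h
      · refine Or.inr ⟨j, ?_, h1⟩
        by_contra hσ; rw [hub_of_not_mem σ hσ] at h2; exact U_ne_Vt h2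
      · by_cases hσ : σ j
        · exact Or.inr ⟨j, hσ, h1⟩
        · rw [hub_of_not_mem σ hσ] at h2; exact absurd h2 U_ne_Vt
    · exact Or.inl h2
    · exact absurd h1 U_ne_Vt
  · rintro (rfl | ⟨i, hσ, rfl⟩)
    · exact Or.inr (Or.inl ⟨rfl, rfl⟩)
    · exact Or.inl ⟨i, Or.inr ⟨rfl, (hub_of_mem σ hσ).symm⟩⟩

lemma adj_Vt_iff (σ : Fin n → Prop) (b : Fin (n + 2)) :
    (G σ).Adj (Vt n) b ↔ b = U n ∨ ∃ i, ¬ σ i ∧ b = emb i := by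
  constructor
  · rintro (⟨j, ⟨h1, h2⟩ | ⟨h1, h2⟩⟩ | ⟨h1, h2⟩ | ⟨h1, h2⟩)
    · exact absurd h1.symm (emb_ne_Vt j)
    · by_cases hσ : σ j
      · rw [hub_of_mem σ hσ] at h2; exact absurd h2.symm U_ne_Vt
      · exact Or.inr ⟨j, hσ, h1⟩
    · exact absurd h1.symm U_ne_Vt
    · exact Or.inl h2
  · rintro (rfl | ⟨i, hσ, rfl⟩)
    · exact Or.inr (Or.inr ⟨rfl, rfl⟩)
    · exact Or.inl ⟨i, Or.inr ⟨rfl, (hub_of_not_mem σ hσ).symm⟩⟩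

lemma adj_hub (σ : Fin n → Prop) (i : Fin n) : (G σ).Adj (emb i) (hub σ i) :=
  (adj_emb_iff σ i _).2 rfl

lemma adj_UV (σ : Fin n → Prop) : (G σ).Adj (U n) (Vt n) :=
  (adj_U_iff σ _).2 (Or.inl rfl)


lemma neighborFinset_emb (σ : Fin n → Prop) (i : Fin n) :
    (G σ).neighborFinset (emb i) = {hub σ i} := by
  ext b; simp [SimpleGraph.mem_neighborFinset, adj_emb_iff]

lemma degree_emb (σ : Fin n → Prop) (i : Fin n) : (G σ).degree (emb i) = 1 := by
  rw [SimpleGraph.degree, neighborFinset_emb]; simp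

lemma unique_nbr (σ : Fin n → Prop) {i : Fin n} {b : Fin (n + 2)}
    (h : (G σ).Adj (emb i) b) : b = hub σ i := (adj_emb_iff σ i b).1 h

/-- Every vertex is a leaf or one of the two hubs. -/
lemma vertex_cases (v : Fin (n + 2)) : (∃ i, v = emb i) ∨ v = U n ∨ v = Vt n := by
  rcases lt_trichotomy v.val n with h | h | h
  · exact Or.inl ⟨⟨v.val, h⟩, by simp [emb, Fin.ext_iff]⟩
  · exact Or.inr (Or.inl (by simp [U, Fin.ext_iff, h]))
  · refine Or.inr (Or.inr ?_)
    have := v.isLt; simp [Vt, Fin.ext_iff]; omega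

lemma three_le_degree_U (σ : Fin n → Prop) {i0 i1 : Fin n} (h0 : σ i0) (h1 : σ i1)
    (hne : i0 ≠ i1) : 3 ≤ (G σ).degree (U n) := by
  have hsub : {Vt n, emb i0, emb i1} ⊆ (G σ).neighborFinset (U n) := by
    intro b hb
    simp only [Finset.mem_insert, Finset.mem_singleton] at hb
    rw [SimpleGraph.mem_neighborFinset, adj_U_iff]
    rcases hb with rfl | rfl | rfl
    · exact Or.inl rfl
    · exact Or.inr ⟨i0, h0, rfl⟩
    · exact Or.inr ⟨i1, h1, rfl⟩
  have hcard : ({Vt n, emb i0, emb i1} : Finset (Fin (n + 2))).card = 3 := by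
    rw [Finset.card_insert_of_notMem, Finset.card_insert_of_notMem]
    · simp
    · simp [emb_injective.ne_iff.2 hne]
    · simp [(emb_ne_Vt i0).symm, (emb_ne_Vt i1).symm]
  calc 3 = ({Vt n, emb i0, emb i1} : Finset (Fin (n + 2))).card := hcard.symm
    _ ≤ _ := Finset.card_le_card hsub

lemma three_le_degree_Vt (σ : Fin n → Prop) {j0 j1 : Fin n} (h0 : ¬ σ j0) (h1 : ¬ σ j1)
    (hne : j0 ≠ j1) : 3 ≤ (G σ).degree (Vt n) := by
  have hsub : {U n, emb j0, emb j1} ⊆ (G σ).neighborFinset (Vt n) := by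
    intro b hb
    simp only [Finset.mem_insert, Finset.mem_singleton] at hb
    rw [SimpleGraph.mem_neighborFinset, adj_Vt_iff]
    rcases hb with rfl | rfl | rfl
    · exact Or.inl rfl
    · exact Or.inr ⟨j0, h0, rfl⟩
    · exact Or.inr ⟨j1, h1, rfl⟩
  have hcard : ({U n, emb j0, emb j1} : Finset (Fin (n + 2))).card = 3 := by
    rw [Finset.card_insert_of_notMem, Finset.card_insert_of_notMem]
    · simp
    · simp [emb_injective.ne_iff.2 hne]
    · simp [(emb_ne_U j0).symm, (emb_ne_U j1).symm]
  calc 3 = ({U n, emb j0, emb j1} : Finset (Fin (n + 2))).card := hcard.symm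
    _ ≤ _ := Finset.card_le_card hsub

lemma connected (σ : Fin n → Prop) : (G σ).Connected := by
  rw [SimpleGraph.connected_iff]
  refine ⟨?_, ⟨U n⟩⟩
  have key : ∀ v, (G σ).Reachable v (U n) := by
    intro v
    rcases vertex_cases v with ⟨i, rfl⟩ | rfl | rfl
    · rcases hub_eq_or σ i with h | h
      · exact (adj_hub σ i).reachable.trans (by rw [h])
      · exact (adj_hub σ i).reachable.trans
          (h ▸ ((adj_UV σ).symm.reachable))
    · rfl
    · exact ((adj_UV σ).symm.reachable)
  intro u v
  exact (key u).trans (key v).symm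

/-- A walk in a graph preserves any predicate that is invariant under adjacency. -/
lemma walk_invariant {W : Type*} {H : SimpleGraph W} (P : W → Prop)
    (hP : ∀ a b, H.Adj a b → (P a ↔ P b)) :
    ∀ {a b : W}, H.Walk a b → (P a ↔ P b) := by
  intro a b p
  induction p with
  | nil => rfl
  | cons h q ih => exact (hP _ _ h).trans ih

lemma isAcyclic (σ : Fin n → Prop) : (G σ).IsAcyclic := by
  rw [isAcyclic_iff_forall_adj_isBridge]
  intro v w hvw
  rw [SimpleGraph.isBridge_iff]
  rintro ⟨p⟩
  -- case on which edge s(v,w) is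
  rcases hvw with ⟨i, ⟨h1, h2⟩ | ⟨h1, h2⟩⟩ | ⟨h1, h2⟩ | ⟨h1, h2⟩
  · -- v = emb i, w = hub σ i : leaf edge; invariant : being emb i
    subst h1 h2
    have := walk_invariant (fun z => z = emb i) ?_ p
    · exact emb_ne_hub σ i i (this.1 rfl).symm
    · intro a b hab
      rcases hab with ⟨hab, hne⟩
      constructor
      · rintro rfl
        have := unique_nbr σ hab
        subst this
        simp [Sym2.eq_iff] at hne
        first | exact hne | exact hne.symm
      · rintro rfl
        have := unique_nbr σ hab.symm
        subst this
        simp [Sym2.eq_iff] at hne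
        first | exact hne | exact hne.symm
  · -- w = emb i, v = hub σ i
    subst h1 h2
    have := walk_invariant (fun z => z = emb i) ?_ p
    · exact emb_ne_hub σ i i (this.2 rfl).symm
    · intro a b hab
      rcases hab with ⟨hab, hne⟩
      constructor
      · rintro rfl
        have := unique_nbr σ hab
        subst this
        simp [Sym2.eq_iff] at hne
        first | exact hne | exact hne.symm
      · rintro rfl
        have := unique_nbr σ hab.symm
        subst this
        simp [Sym2.eq_iff] at hne
        first | exact hne | exact hne.symm
  · -- v = U, w = Vt : hub edge; invariant : being on the U-side
    subst h1 h2
    have := walk_invariant (fun z => z = U n ∨ ∃ i, σ i ∧ z = emb i) ?_ p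
    · rcases this.1 (Or.inl rfl) with h | ⟨i, _, h⟩
      · exact U_ne_Vt h.symm
      · exact emb_ne_Vt i h.symm
    · intro a b hab
      rcases hab with ⟨hab, hne⟩
      simp only [fromEdgeSet_adj, Set.mem_singleton_iff] at hne
      constructor
      · rintro (rfl | ⟨i, hσ, rfl⟩)
        · rcases (adj_U_iff σ b).1 hab with rfl | ⟨i, hσ, rfl⟩
          · exact absurd (by simp [Sym2.eq_iff]) (fun h => hne ⟨h, (G σ).ne_of_adj hab⟩)
          · exact Or.inr ⟨i, hσ, rfl⟩
        · have := unique_nbr σ hab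
          rw [hub_of_mem σ hσ] at this
          exact Or.inl this
      · rintro (rfl | ⟨i, hσ, rfl⟩)
        · rcases (adj_U_iff σ a).1 hab.symm with rfl | ⟨i, hσ, rfl⟩
          · exact absurd (by simp [Sym2.eq_iff]) (fun h => hne ⟨h, (G σ).ne_of_adj hab⟩)
          · exact Or.inr ⟨i, hσ, rfl⟩
        · have := unique_nbr σ hab.symm
          rw [hub_of_mem σ hσ] at this
          exact Or.inl this
  · -- v = Vt, w = U : same as above with the walk reversed
    subst h1 h2
    have := walk_invariant (fun z => z = U n ∨ ∃ i, σ i ∧ z = emb i) ?_ p.reverse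
    · rcases this.1 (Or.inl rfl) with h | ⟨i, _, h⟩
      · exact U_ne_Vt h.symm
      · exact emb_ne_Vt i h.symm
    · intro a b hab
      rcases hab with ⟨hab, hne⟩
      simp only [fromEdgeSet_adj, Set.mem_singleton_iff] at hne
      constructor
      · rintro (rfl | ⟨i, hσ, rfl⟩)
        · rcases (adj_U_iff σ b).1 hab with rfl | ⟨i, hσ, rfl⟩
          · exact absurd (by simp [Sym2.eq_iff]) (fun h => hne ⟨h, (G σ).ne_of_adj hab⟩)
          · exact Or.inr ⟨i, hσ, rfl⟩
        · have := unique_nbr σ hab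
          rw [hub_of_mem σ hσ] at this
          exact Or.inl this
      · rintro (rfl | ⟨i, hσ, rfl⟩)
        · rcases (adj_U_iff σ a).1 hab.symm with rfl | ⟨i, hσ, rfl⟩
          · exact absurd (by simp [Sym2.eq_iff]) (fun h => hne ⟨h, (G σ).ne_of_adj hab⟩)
          · exact Or.inr ⟨i, hσ, rfl⟩
        · have := unique_nbr σ hab.symm
          rw [hub_of_mem σ hσ] at this
          exact Or.inl this

lemma isTree (σ : Fin n → Prop) : (G σ).IsTree := ⟨connected σ, isAcyclic σ⟩


lemma adj_edge_cases (σ : Fin n → Prop) {a b : Fin (n + 2)} (h : (G σ).Adj a b) :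
    (∃ i, s(a, b) = s(emb i, hub σ i)) ∨ s(a, b) = s(U n, Vt n) := by
  rcases h with ⟨i, ⟨h1, h2⟩ | ⟨h1, h2⟩⟩ | ⟨h1, h2⟩ | ⟨h1, h2⟩
  · exact Or.inl ⟨i, by rw [h1, h2]⟩
  · exact Or.inl ⟨i, by rw [h1, h2, Sym2.eq_swap]⟩
  · exact Or.inr (by rw [h1, h2])
  · exact Or.inr (by rw [h1, h2, Sym2.eq_swap])

/-- A vertex with a unique neighbor on a path must be an endpoint. -/
lemma endpoint_of_unique_nbr {W : Type*} {H : SimpleGraph W} {x n0 : W}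
    (hx : ∀ y, H.Adj x y → y = n0) :
    ∀ {a b : W} (p : H.Walk a b), p.IsPath → x ∈ p.support → x = a ∨ x = b := by
  intro a b p
  induction p with
  | nil => intro _ h; rw [SimpleGraph.Walk.support_nil, List.mem_singleton] at h; exact Or.inl h
  | @cons a c b h q ih =>
    intro hp hs
    rw [SimpleGraph.Walk.support_cons, List.mem_cons] at hs
    rcases hs with rfl | hs
    · exact Or.inl rfl
    · rcases ih hp.of_cons hs with rfl | rfl
      · -- x is the second vertex
        have ha : a = n0 := hx a h.symm
        cases q with
        | nil => exact Or.inr rfl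
        | @cons _ d _ h' q' =>
          have hd : d = n0 := hx d h'
          exfalso
          have hnot : a ∉ (SimpleGraph.Walk.cons h' q').support :=
            ((SimpleGraph.Walk.cons_isPath_iff _ _).1 hp).2
          apply hnot
          rw [SimpleGraph.Walk.support_cons, List.mem_cons]
          right
          rw [ha, ← hd]
          exact SimpleGraph.Walk.start_mem_support q'
      · exact Or.inr rfl

/-- One explicit path witnessing all the relevant edge memberships. -/
lemma onPath_all (σ : Fin n → Prop) {i j : Fin n} (hi : σ i) (hj : ¬ σ j) :
    ∃ p : (G σ).Walk (emb i) (emb j), p.IsPath ∧ s(emb i, hub σ i) ∈ p.edges ∧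
      s(U n, Vt n) ∈ p.edges ∧ s(emb j, hub σ j) ∈ p.edges := by
  have h1 : (G σ).Adj (emb i) (U n) := by
    have := adj_hub σ i; rwa [hub_of_mem σ hi] at this
  have h2 := adj_UV σ
  have h3 : (G σ).Adj (Vt n) (emb j) := by
    have := (adj_hub σ j).symm; rwa [hub_of_not_mem σ hj] at this
  have hij : emb i ≠ emb j := by
    intro h; exact hj (emb_injective h ▸ hi)
  refine ⟨.cons h1 (.cons h2 (.cons h3 .nil)), ?_, ?_, ?_, ?_⟩
  · rw [SimpleGraph.Walk.isPath_def]
    simp [List.nodup_cons, emb_ne_U i, emb_ne_Vt i, hij, U_ne_Vt,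
      (emb_ne_U j).symm, (emb_ne_Vt j).symm]
  · simp [hub_of_mem σ hi]
  · simp
  · simp [hub_of_not_mem σ hj, Sym2.eq_swap]

lemma subtreeEdges_eq (σ : Fin n → Prop) (S : Finset (Fin n))
    (hU : ∃ i ∈ S, σ i) (hV : ∃ j ∈ S, ¬ σ j) :
    subtreeEdges (G σ) (S.image emb) =
      S.image (fun i => s(emb i, hub σ i)) ∪ {s(U n, Vt n)} := by
  obtain ⟨i0, hi0S, hi0⟩ := hU
  obtain ⟨j0, hj0S, hj0⟩ := hV
  ext ed
  simp only [subtreeEdges, OnPath, Finset.mem_filter, SimpleGraph.mem_edgeFinset,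
    Finset.mem_union, Finset.mem_image, Finset.mem_singleton]
  constructor
  · rintro ⟨hed, a, ⟨ia, hiaS, rfl⟩, b, ⟨ib, hibS, rfl⟩, p, hp, hmem⟩
    induction ed using Sym2.ind with
    | _ x y =>
    rcases adj_edge_cases σ ((G σ).mem_edgeSet.1 hed) with ⟨i, hi⟩ | h
    · rw [hi] at hmem
      have hsup := SimpleGraph.Walk.fst_mem_support_of_mem_edges p hmem
      have hend := endpoint_of_unique_nbr (fun z hz => unique_nbr σ hz) p hp hsup
      refine Or.inl ⟨i, ?_, hi.symm⟩
      rcases hend with h' | h'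
      · rwa [← emb_injective h'] at hiaS
      · rwa [← emb_injective h'] at hibS
    · exact Or.inr h
  · rintro (⟨i, hiS, rfl⟩ | rfl)
    · by_cases hσ : σ i
      · obtain ⟨p, hp, h1, _, _⟩ := onPath_all σ hσ hj0
        exact ⟨(adj_hub σ i), emb i, ⟨i, hiS, rfl⟩, emb j0, ⟨j0, hj0S, rfl⟩, p, hp, h1⟩
      · obtain ⟨p, hp, _, _, h3⟩ := onPath_all σ hi0 hσ
        exact ⟨(adj_hub σ i), emb i0, ⟨i0, hi0S, rfl⟩, emb i, ⟨i, hiS, rfl⟩, p, hp, h3⟩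
    · obtain ⟨p, hp, _, h2, _⟩ := onPath_all σ hi0 hj0
      exact ⟨(adj_UV σ), emb i0, ⟨i0, hi0S, rfl⟩, emb j0, ⟨j0, hj0S, rfl⟩, p, hp, h2⟩

lemma card_subtreeEdges (σ : Fin n → Prop) (S : Finset (Fin n))
    (hU : ∃ i ∈ S, σ i) (hV : ∃ j ∈ S, ¬ σ j) :
    (subtreeEdges (G σ) (S.image emb)).card = S.card + 1 := by
  rw [subtreeEdges_eq σ S hU hV]
  rw [Finset.card_union_of_disjoint, Finset.card_image_of_injOn, Finset.card_singleton]
  · intro i _ j _ h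
    rcases Sym2.eq_iff.1 h with ⟨h1, _⟩ | ⟨h1, _⟩
    · exact emb_injective h1
    · exact absurd h1 (emb_ne_hub σ i j)
  · rw [Finset.disjoint_singleton_right, Finset.mem_image]
    rintro ⟨i, _, h⟩
    rcases Sym2.eq_iff.1 h with ⟨h1, _⟩ | ⟨h1, _⟩
    · exact emb_ne_U i h1
    · exact emb_ne_Vt i h1

lemma filter_card_le {P : Fin n → Prop} (D : DecidablePred P) {k : ℕ} (g : Fin n → ℕ)
    (hg : ∀ i : Fin n, P i → g i < k)
    (hinj : ∀ i j : Fin n, P i → P j → g i = g j → i = j) :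
    (@Finset.filter (Fin n) P D Finset.univ).card ≤ k := by
  letI := D
  have := Finset.card_le_card_of_injOn
    (s := @Finset.filter (Fin n) P D Finset.univ) (t := Finset.range k) g
    (fun i hi => Finset.mem_range.2 (hg i (Finset.mem_filter.1 hi).2))
    (fun i hi j hj h => hinj i j
      (Finset.mem_filter.1 (Finset.mem_coe.1 hi)).2
      (Finset.mem_filter.1 (Finset.mem_coe.1 hj)).2 h)
  simpa using this

lemma exists_mem_of_lt (S T : Finset (Fin n)) (P : Fin n → Prop)
    (hT : ∀ i, ¬ P i → i ∈ T) (h : T.card < S.card) : ∃ i ∈ S, P i := by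
  by_contra hc
  push_neg at hc
  exact absurd (Finset.card_le_card fun i hi => hT i (hc i hi)) (not_le.2 h)

end PS

/-- sharpness in the Pachter–Speyer theorem: if `|X| = 2m - 2` (`m ≥ 3`)
then there are two positively edge-weighted phylogenetic `X`-trees with identical
`m`-subtree weight maps which are not isomorphic by any weight-preserving isomorphism
fixing `X`. -/
theorem subtree_weights_do_not_determine_tree
    {X : Type*} [Fintype X] (m : ℕ) (hm : 3 ≤ m)
    (hX : Fintype.card X = 2 * m - 2) :
    ∃ (N N' : ℕ) (G : SimpleGraph (Fin N)) (G' : SimpleGraph (Fin N'))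
      (f : X → Fin N) (f' : X → Fin N')
      (w : Sym2 (Fin N) → ℝ) (w' : Sym2 (Fin N') → ℝ),
      G.IsTree ∧ G'.IsTree ∧
      Function.Injective f ∧ Function.Injective f' ∧
      (∀ v, G.degree v = 1 ↔ v ∈ Set.range f) ∧
      (∀ v, G'.degree v = 1 ↔ v ∈ Set.range f') ∧
      (∀ v, v ∉ Set.range f → 3 ≤ G.degree v) ∧
      (∀ v, v ∉ Set.range f' → 3 ≤ G'.degree v) ∧
      (∀ e ∈ G.edgeSet, 0 < w e) ∧ (∀ e ∈ G'.edgeSet, 0 < w' e) ∧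
      -- the `m`-subtree weight maps agree ...
      (∀ R : Finset X, R.card = m →
        subtreeWeight G w (R.image f) = subtreeWeight G' w' (R.image f')) ∧
      -- ... but no weight-preserving isomorphism fixes `X`
      ¬ ∃ φ : G ≃g G', (∀ x : X, φ (f x) = f' x) ∧
          ∀ a b : Fin N, G.Adj a b → w' s(φ a, φ b) = w s(a, b) := by
  obtain ⟨n, hn⟩ : ∃ n : ℕ, n = 2 * m - 2 := ⟨_, rfl⟩
  have hn4 : 4 ≤ n := by omega
  have hcardX : Fintype.card X = n := by omega
  let e : X ≃ Fin n := Fintype.equivFinOfCardEq hcardX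
  set σ : Fin n → Prop := fun i => (i : ℕ) < m - 1 with hσdef
  set σ' : Fin n → Prop := fun i => 1 ≤ (i : ℕ) ∧ (i : ℕ) < m with hσ'def
  set f : X → Fin (n + 2) := fun x => PS.emb (e x) with hfdef
  -- injectivity of the labelling
  have hfinj : Function.Injective f := fun x y h => e.injective (PS.emb_injective h)
  -- membership of the range
  have hrange : ∀ v : Fin (n + 2), v ∈ Set.range f ↔ ∃ i, v = PS.emb i := by
    intro v
    constructor
    · rintro ⟨x, rfl⟩; exact ⟨e x, rfl⟩
    · rintro ⟨i, rfl⟩; exact ⟨e.symm i, by simp [hfdef]⟩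
  -- indices witnessing both sides in both trees
  have hi0 : (0 : ℕ) < n := by omega
  have hi1 : (1 : ℕ) < n := by omega
  have hi2 : (2 : ℕ) < n := by omega
  have him : m < n := by omega
  have him1 : m - 1 < n := by omega
  have hσ0 : σ ⟨0, hi0⟩ := by simp only [hσdef]; omega
  have hσ1 : σ ⟨1, hi1⟩ := by simp only [hσdef]; omega
  have hσm1 : ¬ σ ⟨m - 1, him1⟩ := by simp only [hσdef]; omega
  have hσm : ¬ σ ⟨m, him⟩ := by simp only [hσdef]; omega
  have hσ'1 : σ' ⟨1, hi1⟩ := by simp only [hσ'def]; omega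
  have hσ'2 : σ' ⟨2, hi2⟩ := by simp only [hσ'def]; omega
  have hσ'0 : ¬ σ' ⟨0, hi0⟩ := by simp only [hσ'def]; omega
  have hσ'm : ¬ σ' ⟨m, him⟩ := by simp only [hσ'def]; omega
  have hne01 : (⟨0, hi0⟩ : Fin n) ≠ ⟨1, hi1⟩ := by simp [Fin.ext_iff]
  have hne12 : (⟨1, hi1⟩ : Fin n) ≠ ⟨2, hi2⟩ := by simp [Fin.ext_iff]
  have hne0m : (⟨0, hi0⟩ : Fin n) ≠ ⟨m, him⟩ := by simp [Fin.ext_iff]; omega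
  have hnem1m : (⟨m - 1, him1⟩ : Fin n) ≠ ⟨m, him⟩ := by simp [Fin.ext_iff]; omega
  -- degree facts, uniform in the side assignment
  have degIff : ∀ (τ : Fin n → Prop), 3 ≤ (PS.G τ).degree (PS.U n) →
      3 ≤ (PS.G τ).degree (PS.Vt n) →
      ((∀ v, (PS.G τ).degree v = 1 ↔ v ∈ Set.range f) ∧
       (∀ v, v ∉ Set.range f → 3 ≤ (PS.G τ).degree v)) := by
    intro τ hU hV
    constructor
    · intro v
      rw [hrange]
      constructor
      · intro hd
        rcases PS.vertex_cases v with ⟨i, rfl⟩ | rfl | rfl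
        · exact ⟨i, rfl⟩
        · omega
        · omega
      · rintro ⟨i, rfl⟩; exact PS.degree_emb τ i
    · intro v hv
      rw [hrange] at hv
      rcases PS.vertex_cases v with ⟨i, rfl⟩ | rfl | rfl
      · exact absurd ⟨i, rfl⟩ hv
      · exact hU
      · exact hV
  have degG := degIff σ (PS.three_le_degree_U σ hσ0 hσ1 hne01)
    (PS.three_le_degree_Vt σ hσm1 hσm hnem1m)
  have degG' := degIff σ' (PS.three_le_degree_U σ' hσ'1 hσ'2 hne12)
    (PS.three_le_degree_Vt σ' hσ'0 hσ'm hne0m)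
  -- cardinality bounds on the two sides
  have cardσtrue : (@Finset.filter (Fin n) (fun i => σ i)
      (fun a => Classical.propDecidable (σ a)) Finset.univ).card ≤ m - 1 := by
    refine PS.filter_card_le _ (fun i => (i : ℕ)) ?_ ?_
    · intro i hi; simp only [hσdef] at hi; omega
    · intro i j _ _ h; exact Fin.ext h
  have cardσfalse : (@Finset.filter (Fin n) (fun i => ¬ σ i)
      (fun a => Classical.propDecidable (¬ σ a)) Finset.univ).card ≤ m - 1 := by
    refine PS.filter_card_le _ (fun i => (i : ℕ) - (m - 1)) ?_ ?_
    · intro i hi; simp only [hσdef, not_lt] at hi; have := i.isLt; omega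
    · intro i j hi hj h
      simp only [hσdef, not_lt] at hi hj
      apply Fin.ext; omega
  have cardσ'true : (@Finset.filter (Fin n) (fun i => σ' i)
      (fun a => Classical.propDecidable (σ' a)) Finset.univ).card ≤ m - 1 := by
    refine PS.filter_card_le _ (fun i => (i : ℕ) - 1) ?_ ?_
    · intro i hi; simp only [hσ'def] at hi; omega
    · intro i j hi hj h
      simp only [hσ'def] at hi hj
      apply Fin.ext; omega
  have cardσ'false : (@Finset.filter (Fin n) (fun i => ¬ σ' i)
      (fun a => Classical.propDecidable (¬ σ' a)) Finset.univ).card ≤ m - 1 := by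
    refine PS.filter_card_le _ (fun i => if (i : ℕ) = 0 then 0 else (i : ℕ) - m + 1) ?_ ?_
    · intro i hi
      simp only [hσ'def, not_and_or, not_le, not_lt] at hi
      have := i.isLt
      rcases hi with h | h
      · rw [if_pos (show (i : ℕ) = 0 by omega)]; omega
      · rw [if_neg (show ¬ (i : ℕ) = 0 by omega)]; omega
    · intro i j hi hj h
      simp only [hσ'def, not_and_or, not_le, not_lt] at hi hj
      have h1 := i.isLt; have h2 := j.isLt
      apply Fin.ext
      rcases hi with hi | hi
      · rcases hj with hj | hj
        · omega
        · rw [if_pos (show (i : ℕ) = 0 by omega),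
            if_neg (show ¬ (j : ℕ) = 0 by omega)] at h
          omega
      · rcases hj with hj | hj
        · rw [if_neg (show ¬ (i : ℕ) = 0 by omega),
            if_pos (show (j : ℕ) = 0 by omega)] at h
          omega
        · rw [if_neg (show ¬ (i : ℕ) = 0 by omega),
            if_neg (show ¬ (j : ℕ) = 0 by omega)] at h
          omega
  refine ⟨n + 2, n + 2, PS.G σ, PS.G σ', f, f, fun _ => 1, fun _ => 1,
    PS.isTree σ, PS.isTree σ', hfinj, hfinj, degG.1, degG'.1, degG.2, degG'.2,
    fun _ _ => one_pos, fun _ _ => one_pos, ?_, ?_⟩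
  · -- equal subtree weight maps
    intro R hR
    have himg : R.image f = (R.image fun x => e x).image PS.emb := by
      rw [Finset.image_image]; rfl
    have hcardS : (R.image fun x => e x).card = m := by
      rw [Finset.card_image_of_injective _ e.injective, hR]
    have hm1m : m - 1 < m := by omega
    have key : ∀ (τ : Fin n → Prop),
        (@Finset.filter (Fin n) (fun i => τ i)
          (fun a => Classical.propDecidable (τ a)) Finset.univ).card ≤ m - 1 →
        (@Finset.filter (Fin n) (fun i => ¬ τ i)
          (fun a => Classical.propDecidable (¬ τ a)) Finset.univ).card ≤ m - 1 →
        subtreeWeight (PS.G τ) (fun _ => (1 : ℝ)) (R.image f) = m + 1 := by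
      intro τ ht hf2
      have hU : ∃ i ∈ (R.image fun x => e x), τ i :=
        PS.exists_mem_of_lt _ (@Finset.filter (Fin n) (fun i => ¬ τ i)
            (fun a => Classical.propDecidable (¬ τ a)) Finset.univ) _
          (fun i hi => by
            simp only [Finset.mem_filter, Finset.mem_univ, true_and]; exact hi) (by omega)
      have hV : ∃ j ∈ (R.image fun x => e x), ¬ τ j :=
        PS.exists_mem_of_lt _ (@Finset.filter (Fin n) (fun i => τ i)
            (fun a => Classical.propDecidable (τ a)) Finset.univ) _
          (fun i hi => by
            simp only [Finset.mem_filter, Finset.mem_univ, true_and]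
            exact not_not.1 hi) (by omega)
      rw [himg, subtreeWeight, Finset.sum_const, PS.card_subtreeEdges τ _ hU hV, hcardS]
      simp
    rw [key σ cardσtrue cardσfalse, key σ' cardσ'true cardσ'false]
  · -- no label- and weight-preserving isomorphism
    rintro ⟨φ, hfix, -⟩
    have hfx : ∀ i : Fin n, φ (PS.emb i) = PS.emb i := by
      intro i
      have := hfix (e.symm i)
      simpa [hfdef] using this
    have hA0 : (PS.G σ).Adj (PS.emb ⟨0, hi0⟩) (PS.U n) := by
      have := PS.adj_hub σ ⟨0, hi0⟩
      rwa [PS.hub_of_mem σ hσ0] at this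
    have hA1 : (PS.G σ).Adj (PS.emb ⟨1, hi1⟩) (PS.U n) := by
      have := PS.adj_hub σ ⟨1, hi1⟩
      rwa [PS.hub_of_mem σ hσ1] at this
    have h0 : (PS.G σ').Adj (PS.emb ⟨0, hi0⟩) (φ (PS.U n)) := by
      have := φ.map_adj_iff.2 hA0
      rwa [hfx ⟨0, hi0⟩] at this
    have h1 : (PS.G σ').Adj (PS.emb ⟨1, hi1⟩) (φ (PS.U n)) := by
      have := φ.map_adj_iff.2 hA1
      rwa [hfx ⟨1, hi1⟩] at this
    have e0 := PS.unique_nbr σ' h0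
    have e1 := PS.unique_nbr σ' h1
    rw [PS.hub_of_not_mem σ' hσ'0] at e0
    rw [PS.hub_of_mem σ' hσ'1] at e1
    exact PS.U_ne_Vt (e1.symm.trans e0)
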